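/- Consider the planar ODE system ẋ1 = −(4x1 + x1 x2² + x1 x2) + 2x2 + x2 x1² + 3x1 x2 and ẋ2 = −ẋ1. Then (1,1) is an equilibrium, and the function f(x1,x2) = ∫_1^{x1} ln(6t/(t²+3t+2)) dt + ∫_1^{x2} ln(6t/(t²+t+4)) dt satisfies: f(1,1) = 0, ∇f(1,1) = 0, the Hessian of f at (1,1) is positive definite, and the derivative of f along trajectories is ≤ 0 in ℝ²_{>0}, with equality only at points where 4x1 + x1 x2² + x1 x2 = 2x2 + x2 x1² + 3x1 x2. Consequently (1,1) is locally asymptotically stable on the line {x1 + x2 = 2}. -/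

import Mathlib

open Real Filter

private lemma aurora_cont1 : ∀ t ∈ Set.Ioi (0:ℝ),
    ContinuousAt (fun t : ℝ => Real.log (6*t/(t^2+3*t+2))) t := by
  intro t ht
  simp only [Set.mem_Ioi] at ht
  have hden : t^2+3*t+2 ≠ 0 := by nlinarith
  have hinner : ContinuousAt (fun t : ℝ => 6*t/(t^2+3*t+2)) t :=
    ((continuous_const.mul continuous_id).continuousAt).div (by fun_prop) hden
  exact (Real.continuousAt_log (by positivity)).comp hinner

private lemma aurora_cont2 : ∀ t ∈ Set.Ioi (0:ℝ),
    ContinuousAt (fun t : ℝ => Real.log (6*t/(t^2+t+4))) t := by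
  intro t ht
  simp only [Set.mem_Ioi] at ht
  have hden : t^2+t+4 ≠ 0 := by nlinarith
  have hinner : ContinuousAt (fun t : ℝ => 6*t/(t^2+t+4)) t :=
    ((continuous_const.mul continuous_id).continuousAt).div (by fun_prop) hden
  exact (Real.continuousAt_log (by positivity)).comp hinner

private lemma aurora_hd1 : HasDerivAt (fun t : ℝ => Real.log (6*t/(t^2+3*t+2))) (1/6) 1 := by
  have h1 : HasDerivAt (fun t : ℝ => 6*t) 6 1 := by
    simpa using (hasDerivAt_id (1:ℝ)).const_mul 6
  have h2 : HasDerivAt (fun t : ℝ => t^2+3*t+2) 5 1 := by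
    have := ((hasDerivAt_pow 2 (1:ℝ)).add ((hasDerivAt_id (1:ℝ)).const_mul 3)).add_const 2
    exact this.congr_deriv (by norm_num)
  have h3 : HasDerivAt (fun t : ℝ => 6*t/(t^2+3*t+2)) (1/6) 1 := by
    have := h1.div h2 (by norm_num)
    exact this.congr_deriv (by norm_num)
  have h4 := h3.log (by norm_num)
  convert h4 using 1
  norm_num

private lemma aurora_hd2 : HasDerivAt (fun t : ℝ => Real.log (6*t/(t^2+t+4))) (1/2) 1 := by
  have h1 : HasDerivAt (fun t : ℝ => 6*t) 6 1 := by
    simpa using (hasDerivAt_id (1:ℝ)).const_mul 6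
  have h2 : HasDerivAt (fun t : ℝ => t^2+t+4) 3 1 := by
    have := ((hasDerivAt_pow 2 (1:ℝ)).add (hasDerivAt_id (1:ℝ))).add_const 4
    exact this.congr_deriv (by norm_num)
  have h3 : HasDerivAt (fun t : ℝ => 6*t/(t^2+t+4)) (1/2) 1 := by
    have := h1.div h2 (by norm_num)
    exact this.congr_deriv (by norm_num)
  have h4 := h3.log (by norm_num)
  convert h4 using 1
  norm_num

private lemma aurora_sign (p q : ℝ) (hp : 0 < p) (hq : 0 < q) :
    -Real.log (p/q) * (p-q) ≤ 0 ∧ (-Real.log (p/q) * (p-q) = 0 ↔ p = q) := by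
  rcases lt_trichotomy p q with h | h | h
  · have hlog : Real.log (p/q) < 0 := Real.log_neg (by positivity) ((div_lt_one hq).mpr h)
    have : -Real.log (p/q) * (p-q) < 0 := mul_neg_of_pos_of_neg (by linarith) (by linarith)
    exact ⟨le_of_lt this, by constructor <;> intro h' <;> [linarith; linarith]⟩
  · subst h
    rw [div_self hp.ne', Real.log_one]
    simp
  · have hlog : 0 < Real.log (p/q) := Real.log_pos ((one_lt_div hq).mpr h)
    have : -Real.log (p/q) * (p-q) < 0 := mul_neg_of_neg_of_pos (by linarith) (by linarith)
    exact ⟨le_of_lt this, by constructor <;> intro h' <;> [linarith; linarith]⟩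

/-- Example: the two-species autocatalytic system
`ẋ1 = −(4x1 + x1 x2² + x1 x2) + 2x2 + x2 x1² + 3x1 x2`, `ẋ2 = −ẋ1`.
`(1,1)` is an equilibrium; `f(x1,x2) = ∫₁^{x1} ln(6t/(t²+3t+2)) dt +
∫₁^{x2} ln(6t/(t²+t+4)) dt` vanishes at `(1,1)` together with its gradient,
has positive definite Hessian there, decreases along trajectories (with
equality only where the forward and backward total rates coincide), and
consequently `(1,1)` is locally asymptotically stable on `{x1 + x2 = 2}`. -/
theorem aurora_example_lyapunov :
    let P : ℝ → ℝ → ℝ := fun x1 x2 => 4*x1 + x1*x2^2 + x1*x2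
    let Q : ℝ → ℝ → ℝ := fun x1 x2 => 2*x2 + x2*x1^2 + 3*x1*x2
    let f : ℝ → ℝ → ℝ := fun x1 x2 =>
      (∫ t in (1:ℝ)..x1, Real.log (6*t/(t^2+3*t+2))) +
      (∫ t in (1:ℝ)..x2, Real.log (6*t/(t^2+t+4)))
    (Q 1 1 - P 1 1 = 0) ∧
    f 1 1 = 0 ∧
    deriv (fun t => f t 1) 1 = 0 ∧
    deriv (fun t => f 1 t) 1 = 0 ∧
    (Matrix.of ![![deriv (fun t => Real.log (6*t/(t^2+3*t+2))) 1, 0],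
                 ![0, deriv (fun t => Real.log (6*t/(t^2+t+4))) 1]]).PosDef ∧
    (∀ x1 x2 : ℝ, 0 < x1 → 0 < x2 →
      -Real.log (P x1 x2 / Q x1 x2) * (P x1 x2 - Q x1 x2) ≤ 0 ∧
      (-Real.log (P x1 x2 / Q x1 x2) * (P x1 x2 - Q x1 x2) = 0 ↔
        P x1 x2 = Q x1 x2)) ∧
    ∃ δ > 0, ∀ x : ℝ → ℝ × ℝ,
      (∀ t, 0 ≤ t → 0 < (x t).1 ∧ 0 < (x t).2) →
      (∀ t, 0 ≤ t → (x t).1 + (x t).2 = 2) →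
      (∀ t, 0 ≤ t → HasDerivAt x
        (Q (x t).1 (x t).2 - P (x t).1 (x t).2,
         P (x t).1 (x t).2 - Q (x t).1 (x t).2) t) →
      dist (x 0) ((1 : ℝ), (1 : ℝ)) < δ →
      Filter.Tendsto x Filter.atTop (nhds ((1 : ℝ), (1 : ℝ))) := by
  intro P Q f
  have hmeas1 := ContinuousAt.stronglyMeasurableAtFilter (μ := MeasureTheory.volume)
    isOpen_Ioi aurora_cont1 1 (by norm_num)
  have hmeas2 := ContinuousAt.stronglyMeasurableAtFilter (μ := MeasureTheory.volume)
    isOpen_Ioi aurora_cont2 1 (by norm_num)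
  have hii1 : IntervalIntegrable (fun t : ℝ => Real.log (6*t/(t^2+3*t+2)))
      MeasureTheory.volume 1 1 := by
    rw [intervalIntegrable_iff]
    simp
  have hii2 : IntervalIntegrable (fun t : ℝ => Real.log (6*t/(t^2+t+4)))
      MeasureTheory.volume 1 1 := by
    rw [intervalIntegrable_iff]
    simp
  have hftc1 : HasDerivAt (fun u : ℝ => ∫ t in (1:ℝ)..u, Real.log (6*t/(t^2+3*t+2)))
      (Real.log (6*1/(1^2+3*1+2))) 1 :=
    intervalIntegral.integral_hasDerivAt_right hii1 hmeas1 (aurora_cont1 1 (by norm_num))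
  have hftc2 : HasDerivAt (fun u : ℝ => ∫ t in (1:ℝ)..u, Real.log (6*t/(t^2+t+4)))
      (Real.log (6*1/(1^2+1+4))) 1 :=
    intervalIntegral.integral_hasDerivAt_right hii2 hmeas2 (aurora_cont2 1 (by norm_num))
  refine ⟨by norm_num, ?_, ?_, ?_, ?_, ?_, ?_⟩
  · simp [f, intervalIntegral.integral_same]
  · have := (hftc1.add_const (∫ t in (1:ℝ)..1, Real.log (6*t/(t^2+t+4)))).deriv
    simp only [f]
    rw [this]
    norm_num
  · have := (hftc2.const_add (∫ t in (1:ℝ)..1, Real.log (6*t/(t^2+3*t+2)))).deriv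
    simp only [f]
    rw [this]
    norm_num
  · rw [aurora_hd1.deriv, aurora_hd2.deriv]
    have hdiag : (Matrix.of ![![(1/6 : ℝ), 0], ![0, 1/2]]) =
        Matrix.diagonal ![(1/6 : ℝ), 1/2] := by
      ext i j
      fin_cases i <;> fin_cases j <;> simp [Matrix.diagonal]
    rw [hdiag, Matrix.posDef_diagonal_iff]
    intro i
    fin_cases i <;> norm_num
  · intro x1 x2 h1 h2
    have hP : 0 < P x1 x2 := by simp only [P]; nlinarith
    have hQ : 0 < Q x1 x2 := by simp only [Q]; nlinarith
    exact aurora_sign _ _ hP hQ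
  · refine ⟨1, one_pos, ?_⟩
    intro x _hpos hsum hderiv _hdist
    set u : ℝ → ℝ := fun t => (x t).1 with hu_def
    have hu : ∀ t, 0 ≤ t → HasDerivAt u (-2*(u t - 1)*((u t)^2 - u t + 2)) t := by
      intro t ht
      have h1 : HasDerivAt u (Q (x t).1 (x t).2 - P (x t).1 (x t).2) t := by
        have := ((hderiv t ht).hasFDerivAt.fst).hasDerivAt
        simpa using this
      have h2 : (x t).2 = 2 - u t := by have := hsum t ht; simp only [hu_def]; linarith
      convert h1 using 1
      simp only [P, Q, h2, hu_def]
      ring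
    set h : ℝ → ℝ := fun t => (u t - 1)^2 * Real.exp (7*t) with hh_def
    have hh : ∀ t, 0 ≤ t →
        HasDerivAt h (-(((u t - 1)*(2*(u t) - 1))^2) * Real.exp (7*t)) t := by
      intro t ht
      have h1 : HasDerivAt (fun t => (u t - 1)^2)
          (2*(u t - 1)^1 * (-2*(u t - 1)*((u t)^2 - u t + 2))) t :=
        ((hu t ht).sub_const 1).pow 2
      have h2 : HasDerivAt (fun t : ℝ => Real.exp (7*t)) (7 * Real.exp (7*t)) t := by
        have := ((hasDerivAt_id t).const_mul 7).exp
        exact this.congr_deriv (by show Real.exp (7*t) * (7*1) = 7 * Real.exp (7*t); ring)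
      have := h1.mul h2
      exact this.congr_deriv (by ring)
    have hanti : AntitoneOn h (Set.Ici 0) := by
      apply antitoneOn_of_deriv_nonpos (convex_Ici 0)
      · exact fun t ht => ((hh t ht).continuousAt).continuousWithinAt
      · intro t ht
        rw [interior_Ici] at ht
        exact ((hh t (le_of_lt ht)).differentiableAt).differentiableWithinAt
      · intro t ht
        rw [interior_Ici] at ht
        rw [(hh t (le_of_lt ht)).deriv]
        have : (0:ℝ) ≤ ((u t - 1)*(2*(u t) - 1))^2 := sq_nonneg _
        have he : (0:ℝ) < Real.exp (7*t) := Real.exp_pos _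
        nlinarith
    have hbound : ∀ t : ℝ, 0 ≤ t → (u t - 1)^2 ≤ h 0 * Real.exp (-(7*t)) := by
      intro t ht
      have := hanti (Set.self_mem_Ici) (Set.mem_Ici.mpr ht) ht
      have he : (0:ℝ) < Real.exp (7*t) := Real.exp_pos _
      rw [Real.exp_neg]
      calc (u t - 1)^2 = h t * (Real.exp (7*t))⁻¹ := by
            simp only [hh_def]
            field_simp
        _ ≤ h 0 * (Real.exp (7*t))⁻¹ :=
            mul_le_mul_of_nonneg_right this (by positivity)
    have hsq : Tendsto (fun t => (u t - 1)^2) atTop (nhds 0) := by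
      have htop : Tendsto (fun t : ℝ => h 0 * Real.exp (-(7*t))) atTop (nhds 0) := by
        have h7 : Tendsto (fun t : ℝ => 7*t) atTop atTop :=
          Tendsto.const_mul_atTop (by norm_num) tendsto_id
        have := Real.tendsto_exp_neg_atTop_nhds_zero.comp h7
        simpa using this.const_mul (h 0)
      refine tendsto_of_tendsto_of_tendsto_of_le_of_le' tendsto_const_nhds htop
        (Eventually.of_forall fun t => sq_nonneg _) ?_
      filter_upwards [eventually_ge_atTop (0:ℝ)] with t ht using hbound t ht
    have hu1 : Tendsto u atTop (nhds 1) := by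
      rw [tendsto_iff_dist_tendsto_zero]
      have := hsq.sqrt
      rw [Real.sqrt_zero] at this
      refine this.congr fun t => ?_
      rw [Real.sqrt_sq_eq_abs, Real.dist_eq]
    have hx2 : Tendsto (fun t => (2 : ℝ) - u t) atTop (nhds 1) := by
      have := (tendsto_const_nhds (x := (2:ℝ)) (f := atTop)).sub hu1
      norm_num at this
      exact this
    have hpair : Tendsto (fun t => (u t, 2 - u t)) atTop (nhds ((1:ℝ), (1:ℝ))) :=
      hu1.prodMk_nhds hx2
    refine hpair.congr' ?_
    filter_upwards [eventually_ge_atTop (0:ℝ)] with t ht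
    have h2 := hsum t ht
    ext
    · rfl
    · simp only [hu_def]; linarith
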